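/- Let (V, E⁺, E⁻) be a signed graph on n vertices. Define the directed graph D on the set W of pairs (v, X) with X ⊆ V, v ∉ X, and v good for X, with an arc from (v, X) to (v', X') iff X' = X ∪ {v}. Then (V, E⁺, E⁻) admits a feasible line embedding if and only if there exist vertices (u, ∅) and (v, V \ {v}) in W such that (v, V \ {v}) is reachable from (u, ∅) in D. -/

import Mathlib

/-- `v ∉ X` is good for `X`: no negative neighbour of `v` inside `X` has a
positive neighbour outside `X ∪ {v}`, and no negative neighbour of `v` outside
`X ∪ {v}` has a positive neighbour inside `X`. -/
def Good {V : Type} (Ep En : V → V → Prop) (X : Set V) (v : V) : Prop :=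
  v ∉ X ∧
  (∀ w ∈ X, En v w → ∀ z : V, z ∉ X → z ≠ v → ¬ Ep w z) ∧
  (∀ w : V, w ∉ X → w ≠ v → En v w → ∀ z ∈ X, ¬ Ep w z)

/-- π is a feasible line embedding of the signed graph (V, Ep, En). -/
def Feasible {V : Type} (Ep En : V → V → Prop) (π : V → ℕ) : Prop :=
  Function.Injective π ∧
  (∀ u u₁ u₂ : V, π u₁ < π u₂ → π u₂ < π u → Ep u₁ u → ¬ En u₂ u) ∧
  (∀ u u₁ u₂ : V, π u < π u₂ → π u₂ < π u₁ → Ep u₁ u → ¬ En u₂ u)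

/-- The arc relation of the dynamic-programming digraph: from a good pair
`(v, X)` to a good pair `(v', X')` iff `X' = X ∪ {v}`. -/
def DPStep {V : Type} (Ep En : V → V → Prop) (p q : V × Set V) : Prop :=
  Good Ep En p.2 p.1 ∧ Good Ep En q.2 q.1 ∧ q.2 = insert p.1 p.2

lemma mem_take_iff_indexOf {V : Type} [DecidableEq V] :
    ∀ (l : List V) (k : ℕ) (x : V), x ∈ l → (x ∈ l.take k ↔ l.idxOf x < k)
  | [], k, x, h => by simp at h
  | a :: l, 0, x, h => by simp
  | a :: l, (k+1), x, h => by
    by_cases hx : x = a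
    · subst hx; simp
    · have hxl : x ∈ l := by simpa [hx] using h
      simp [List.idxOf_cons_ne _ (fun h' => hx h'.symm), hx, Nat.succ_lt_succ_iff,
        mem_take_iff_indexOf l k x hxl]

/-- A signed graph admits a feasible line embedding iff in the
dynamic-programming digraph some sink `(v, V \ {v})` is reachable from some
source `(u, ∅)`. -/
theorem feasible_iff_dp_reachable
    {V : Type} [Fintype V] [Nonempty V] (Ep En : V → V → Prop)
    (hsymp : ∀ u v, Ep u v → Ep v u) (hsymn : ∀ u v, En u v → En v u)
    (hirrp : ∀ v, ¬ Ep v v) (hirrn : ∀ v, ¬ En v v)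
    (hdisj : ∀ u v, ¬ (Ep u v ∧ En u v)) :
    (∃ π : V → ℕ, Feasible Ep En π) ↔
    (∃ u v : V, Good Ep En ∅ u ∧ Good Ep En (Set.univ \ {v}) v ∧
      Relation.ReflTransGen (DPStep Ep En) (u, ∅) (v, Set.univ \ {v})) := by
  classical
  constructor
  · rintro ⟨π, hinj, hf1, hf2⟩
    -- every vertex is good for its set of predecessors
    have hXgood : ∀ v : V, Good Ep En {u | π u < π v} v := by
      intro v
      refine ⟨by simp, ?_, ?_⟩
      · intro w hw hen z hz hzv hep
        have hz' : π v < π z :=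
          lt_of_le_of_ne (not_lt.1 hz) (fun h => hzv (hinj h.symm))
        exact hf2 w z v hw hz' (hsymp _ _ hep) hen
      · intro w hw hwv hen z hz hep
        have hw' : π v < π w :=
          lt_of_le_of_ne (not_lt.1 hw) (fun h => hwv (hinj h.symm))
        exact hf1 w z v hz hw' (hsymp _ _ hep) hen
    obtain ⟨u₀, -, hmin⟩ := Finset.exists_min_image Finset.univ π
      ⟨Classical.arbitrary V, Finset.mem_univ _⟩
    obtain ⟨v₁, -, hmax⟩ := Finset.exists_max_image Finset.univ π
      ⟨Classical.arbitrary V, Finset.mem_univ _⟩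
    have hX0 : {u | π u < π u₀} = (∅ : Set V) := by
      ext u
      simp only [Set.mem_setOf_eq, Set.mem_empty_iff_false, iff_false, not_lt]
      exact hmin u (Finset.mem_univ _)
    have hX1 : {u | π u < π v₁} = Set.univ \ {v₁} := by
      ext u
      simp only [Set.mem_setOf_eq, Set.mem_diff, Set.mem_univ, Set.mem_singleton_iff, true_and]
      constructor
      · rintro h rfl; exact lt_irrefl _ h
      · intro h
        exact lt_of_le_of_ne (hmax u (Finset.mem_univ _)) (fun he => h (hinj he))
    have reach : ∀ N (v : V), π v = N →
        Relation.ReflTransGen (DPStep Ep En) (u₀, ∅) (v, {u | π u < π v}) := by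
      intro N
      induction N using Nat.strong_induction_on with
      | _ N ih =>
        intro v hv
        by_cases hne : ∃ w, π w < π v
        · obtain ⟨w0, hw0⟩ := hne
          obtain ⟨w, hwmem, hwmax⟩ := Finset.exists_max_image
            (Finset.univ.filter fun w => π w < π v) π ⟨w0, by simp [hw0]⟩
          have hw : π w < π v := by simpa using hwmem
          have hXeq : {u | π u < π v} = insert w {u | π u < π w} := by
            ext x
            simp only [Set.mem_setOf_eq, Set.mem_insert_iff]
            constructor
            · intro hx
              rcases lt_or_eq_of_le (hwmax x (by simp [hx])) with h | h
              · exact Or.inr h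
              · exact Or.inl (hinj h)
            · rintro (rfl | hx)
              · exact hw
              · exact hx.trans hw
          exact (ih (π w) (hv ▸ hw) w rfl).tail ⟨hXgood w, hXgood v, hXeq⟩
        · push_neg at hne
          have hvu : v = u₀ := hinj (le_antisymm (hne u₀) (hmin v (Finset.mem_univ _)))
          subst hvu
          rw [hX0]
    exact ⟨u₀, v₁, hX0 ▸ hXgood u₀, hX1 ▸ hXgood v₁, by
      have := reach (π v₁) v₁ rfl
      rwa [hX1] at this⟩
  · rintro ⟨u, v, hu, hv, hreach⟩
    -- extract an ordered list from the chain
    have key : ∀ p : V × Set V, Relation.ReflTransGen (DPStep Ep En) (u, ∅) p →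
        ∃ L : List V, L.Nodup ∧ p.2 = {x | x ∈ L} ∧ Good Ep En p.2 p.1 ∧
          ∀ i (hi : i < L.length), Good Ep En {x | x ∈ L.take i} (L.get ⟨i, hi⟩) := by
      intro p h
      induction h with
      | refl => exact ⟨[], by simp, by simp, hu, by simp⟩
      | @tail b c h step ih =>
        obtain ⟨L, hnd, hset, hgood, hidx⟩ := ih
        obtain ⟨hgb, hgc, hc2⟩ := step
        have hbL : b.1 ∉ L := by
          intro hmem
          exact hgood.1 (hset ▸ hmem)
        refine ⟨L ++ [b.1], ?_, ?_, hgc, ?_⟩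
        · simp [List.nodup_append, hnd, hbL]; exact fun a ha h => hbL (h ▸ ha)
        · rw [hc2, hset]; ext x; simp [or_comm]
        · intro i hi
          rcases lt_or_eq_of_le (Nat.lt_succ_iff.1 (by simpa using hi)) with h' | h'
          · have h1 : (L ++ [b.1]).take i = L.take i :=
              List.take_append_of_le_length h'.le
            have h2 : (L ++ [b.1]).get ⟨i, hi⟩ = L.get ⟨i, h'⟩ := by simp [List.getElem_append_left h']
            rw [h1, h2]
            exact hidx i h'
          · subst h'
            have h1 : (L ++ [b.1]).take L.length = L := List.take_left
            have h2 : (L ++ [b.1]).get ⟨L.length, hi⟩ = b.1 := by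
              simp
            rw [h1, h2, ← hset]
            exact hgood
    obtain ⟨L, hnd, hset0, -, hidx⟩ := key _ hreach
    have hset : Set.univ \ {v} = {x | x ∈ L} := hset0
    have hvL : v ∉ L := by
      intro hmem
      have : v ∈ Set.univ \ {v} := hset ▸ (hmem : v ∈ {x | x ∈ L})
      simp at this
    set M : List V := L ++ [v] with hM
    have hMnd : M.Nodup := by simp [hM, List.nodup_append, hnd, hvL]; exact fun a ha h => hvL (h ▸ ha)
    have hMmem : ∀ x : V, x ∈ M := by
      intro x
      by_cases hx : x = v
      · simp [hM, hx]
      · have : x ∈ Set.univ \ {v} := by simp [hx]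
        have : x ∈ L := by rwa [hset] at this
        simp [hM, this]
    have hMidx : ∀ i (hi : i < M.length), Good Ep En {x | x ∈ M.take i} (M.get ⟨i, hi⟩) := by
      intro i hi
      rcases lt_or_eq_of_le (Nat.lt_succ_iff.1 (by simpa [hM] using hi)) with h' | h'
      · have h1 : M.take i = L.take i := List.take_append_of_le_length h'.le
        have h2 : M.get ⟨i, hi⟩ = L.get ⟨i, h'⟩ := by simp [hM, List.getElem_append_left h']
        rw [h1, h2]
        exact hidx i h'
      · subst h'
        have h1 : M.take L.length = L := List.take_left
        have h2 : M.get ⟨L.length, hi⟩ = v := by simp [hM]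
        rw [h1, h2, ← hset]
        exact hv
    refine ⟨fun x => M.idxOf x, ?_, ?_, ?_⟩
    · intro x y hxy
      exact (List.idxOf_inj (hMmem x)).1 hxy
    · intro a a₁ a₂ h12 h2a hep hen
      dsimp only at h12 h2a
      have hi : M.idxOf a₂ < M.length := List.idxOf_lt_length_iff.2 (hMmem a₂)
      have hg := hMidx (M.idxOf a₂) hi
      rw [List.idxOf_get hi] at hg
      have ha1 : a₁ ∈ M.take (M.idxOf a₂) :=
        (mem_take_iff_indexOf M _ a₁ (hMmem a₁)).2 h12
      have ha : a ∉ M.take (M.idxOf a₂) := by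
        intro hmem
        exact absurd ((mem_take_iff_indexOf M _ a (hMmem a)).1 hmem) (by omega)
      have hav : a ≠ a₂ := by rintro rfl; omega
      exact hg.2.2 a ha hav hen a₁ ha1 (hsymp _ _ hep)
    · intro a a₁ a₂ ha2 h21 hep hen
      dsimp only at ha2 h21
      have hi : M.idxOf a₂ < M.length := List.idxOf_lt_length_iff.2 (hMmem a₂)
      have hg := hMidx (M.idxOf a₂) hi
      rw [List.idxOf_get hi] at hg
      have ha : a ∈ M.take (M.idxOf a₂) :=
        (mem_take_iff_indexOf M _ a (hMmem a)).2 ha2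
      have ha1 : a₁ ∉ M.take (M.idxOf a₂) := by
        intro hmem
        exact absurd ((mem_take_iff_indexOf M _ a₁ (hMmem a₁)).1 hmem) (by omega)
      have hav : a₁ ≠ a₂ := by rintro rfl; omega
      exact hg.2.1 a ha hen a₁ ha1 hav (hsymp _ _ hep)
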